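/- Let (R, m) be a local integral domain and S an R-algebra that is free of rank > 1 as an R-module. If R has an ideal I minimally generated by two elements (i.e., I is 2-generated but not principal), then there exists a non-Gaussian element f ∈ S with c(f) = I. -/

import Mathlib

noncomputable def ohmRushContent (R : Type*) {M : Type*} [CommRing R] [AddCommGroup M]
    [Module R M] (f : M) : Ideal R :=
  sInf {I : Ideal R | f ∈ I • (⊤ : Submodule R M)}

def IsGaussianElement (R : Type*) {S : Type*} [CommRing R] [CommRing S] [Algebra R S]
    (f : S) : Prop :=
  ∀ g : S, ohmRushContent R (f * g) = ohmRushContent R f * ohmRushContent R g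

section Content

variable {R M : Type*} [CommRing R] [AddCommGroup M] [Module R M]

lemma ohmRushContent_le {f : M} {I : Ideal R} (h : f ∈ I • (⊤ : Submodule R M)) :
    ohmRushContent R f ≤ I := sInf_le h

lemma repr_mem_of_mem_smul {ι : Type*} (B : Module.Basis ι R M) {I : Ideal R} {x : M}
    (h : x ∈ I • (⊤ : Submodule R M)) (i : ι) : B.repr x i ∈ I := by
  refine Submodule.smul_induction_on h ?_ ?_
  · intro r hr n _
    have : B.repr (r • n) i = r * B.repr n i := by
      rw [map_smul]; simp
    rw [this]
    exact Ideal.mul_mem_right _ _ hr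
  · intro x y hx hy
    have : B.repr (x + y) i = B.repr x i + B.repr y i := by
      rw [map_add]; simp
    rw [this]
    exact Ideal.add_mem _ hx hy

lemma mem_span_repr_smul_top {ι : Type*} (B : Module.Basis ι R M) (x : M) :
    x ∈ Ideal.span (Set.range (B.repr x)) • (⊤ : Submodule R M) := by
  have h : (Finsupp.linearCombination R (B : ι → M)) (B.repr x) ∈
      Ideal.span (Set.range (B.repr x)) • (⊤ : Submodule R M) := by
    rw [Finsupp.linearCombination_apply]
    refine Submodule.sum_mem _ fun i _ => ?_
    exact Submodule.smul_mem_smul (Ideal.subset_span ⟨i, rfl⟩) Submodule.mem_top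
  rwa [B.linearCombination_repr] at h

lemma ohmRushContent_eq_span_repr {ι : Type*} (B : Module.Basis ι R M) (x : M) :
    ohmRushContent R x = Ideal.span (Set.range (B.repr x)) := by
  refine le_antisymm (sInf_le (mem_span_repr_smul_top B x)) (le_sInf fun I hI => ?_)
  rw [Ideal.span_le]
  rintro _ ⟨i, rfl⟩
  exact repr_mem_of_mem_smul B hI i

lemma self_mem_content_smul_top {ι : Type*} (B : Module.Basis ι R M) (x : M) :
    x ∈ ohmRushContent R x • (⊤ : Submodule R M) := by
  rw [ohmRushContent_eq_span_repr B x]; exact mem_span_repr_smul_top B x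

lemma apply_mem_of_mem_smul {I : Ideal R} {x : M} (φ : M →ₗ[R] R)
    (h : x ∈ I • (⊤ : Submodule R M)) : φ x ∈ I := by
  refine Submodule.smul_induction_on h ?_ ?_
  · intro r hr n _
    rw [map_smul, smul_eq_mul]
    exact Ideal.mul_mem_right _ _ hr
  · intro x y hx hy
    rw [map_add]
    exact Ideal.add_mem _ hx hy

lemma apply_mem_content {ι : Type*} (B : Module.Basis ι R M) (φ : M →ₗ[R] R) (x : M) :
    φ x ∈ ohmRushContent R x := apply_mem_of_mem_smul φ (self_mem_content_smul_top B x)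

end Content

/-- In a local domain, an ideal whose square is a nonzero principal ideal is principal. -/
lemma principal_of_sq_eq_principal {R : Type*} [CommRing R] [IsDomain R] [IsLocalRing R]
    (I : Ideal R) {d : R} (hd : d ≠ 0) (h : I * I = Ideal.span {d}) : I.IsPrincipal := by
  by_cases hle : I * I ≤ IsLocalRing.maximalIdeal R * Ideal.span {d}
  · exfalso
    have hdmem : d ∈ IsLocalRing.maximalIdeal R * Ideal.span {d} := by
      refine hle ?_
      rw [h]
      exact Ideal.subset_span rfl
    obtain ⟨e, he, hed⟩ := Ideal.mem_mul_span_singleton.mp hdmem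
    have : (e - 1) * d = 0 := by linear_combination hed
    rcases mul_eq_zero.mp this with h1 | h2
    · have he1 : e = 1 := by rwa [sub_eq_zero] at h1
      rw [he1] at he
      exact (IsLocalRing.mem_maximalIdeal 1).mp he isUnit_one
    · exact hd h2
  · rw [Ideal.mul_le] at hle
    push_neg at hle
    obtain ⟨x, hx, y, hy, hxy⟩ := hle
    have hxyI : x * y ∈ Ideal.span {d} := by rw [← h]; exact Ideal.mul_mem_mul hx hy
    obtain ⟨c, hc⟩ := Ideal.mem_span_singleton'.mp hxyI
    have hcu : IsUnit c := by
      by_contra hcu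
      exact hxy (Ideal.mem_mul_span_singleton.mpr
        ⟨c, (IsLocalRing.mem_maximalIdeal c).mpr hcu, hc⟩)
    have hy0 : y ≠ 0 := by
      rintro rfl
      rw [mul_zero] at hc
      rcases mul_eq_zero.mp hc with h1 | h2
      · rw [h1] at hcu; exact not_isUnit_zero hcu
      · exact hd h2
    refine ⟨⟨x, le_antisymm ?_ ?_⟩⟩
    · intro z hz
      have hzy : z * y ∈ Ideal.span {d} := by rw [← h]; exact Ideal.mul_mem_mul hz hy
      obtain ⟨r, hr⟩ := Ideal.mem_span_singleton'.mp hzy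
      have hkey : z * y = (r * ↑hcu.unit⁻¹ * x) * y := by
        have h1 : (↑hcu.unit⁻¹ : R) * c = 1 := hcu.val_inv_mul
        calc z * y = r * d := hr.symm
          _ = r * (↑hcu.unit⁻¹ * c) * d := by rw [h1, mul_one]
          _ = r * ↑hcu.unit⁻¹ * (c * d) := by ring
          _ = r * ↑hcu.unit⁻¹ * (x * y) := by rw [hc]
          _ = (r * ↑hcu.unit⁻¹ * x) * y := by ring
      have := mul_right_cancel₀ hy0 hkey
      rw [this]
      exact Ideal.mem_span_singleton'.mpr ⟨r * ↑hcu.unit⁻¹, rfl⟩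
    · exact Submodule.span_le.mpr (Set.singleton_subset_iff.mpr hx)

/-- Let `(R,m)` be a local domain and `S` an `R`-algebra free of rank `> 1` as an
`R`-module.  If `I` is an ideal of `R` that is 2-generated but not principal, then
there is a non-Gaussian element `f ∈ S` with `c(f) = I`. -/
theorem exists_nonGaussian_of_two_generated (R S : Type*) [CommRing R] [IsDomain R]
    [IsLocalRing R] [CommRing S] [Algebra R S] [Module.Free R S]
    (hrank : 1 < Module.rank R S)
    (I : Ideal R) (hI2 : ∃ a b : R, I = Ideal.span {a, b}) (hInp : ¬ I.IsPrincipal) :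
    ∃ f : S, ohmRushContent R f = I ∧ ¬ IsGaussianElement R f := by
  classical
  obtain ⟨a, b, hIab⟩ := hI2
  have ha : a ≠ 0 := by
    rintro rfl
    refine hInp ⟨⟨b, ?_⟩⟩
    rw [hIab]
    exact Submodule.span_insert_zero
  have hb : b ≠ 0 := by
    rintro rfl
    refine hInp ⟨⟨a, ?_⟩⟩
    rw [hIab]
    have : ({a, 0} : Set R) = insert 0 {a} := by
      ext z; simp [or_comm]
    rw [this]
    exact Submodule.span_insert_zero
  set B := Module.Free.chooseBasis R S with hB
  have hcard : 1 < Cardinal.mk (Module.Free.ChooseBasisIndex R S) := by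
    rw [← Module.Free.rank_eq_card_chooseBasisIndex]; exact hrank
  have hne : Nonempty (Module.Free.ChooseBasisIndex R S) := by
    by_contra hne
    rw [not_nonempty_iff] at hne
    have : Cardinal.mk (Module.Free.ChooseBasisIndex R S) ≤ 1 :=
      Cardinal.le_one_iff_subsingleton.mpr inferInstance
    exact absurd (lt_of_lt_of_le hcard this) (lt_irrefl _)
  -- the span of coordinates of 1 is the whole ring
  have honetop : Ideal.span (Set.range (B.repr 1)) = ⊤ := by
    set J := Ideal.span (Set.range (B.repr (1 : S))) with hJ
    have h1 : (1 : S) ∈ J • (⊤ : Submodule R S) := mem_span_repr_smul_top B 1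
    obtain ⟨k⟩ := hne
    have hmul : ∀ s : S, ∀ x ∈ J • (⊤ : Submodule R S), s * x ∈ J • (⊤ : Submodule R S) := by
      intro s x hx
      refine Submodule.smul_induction_on hx ?_ ?_
      · intro r hr n _
        rw [mul_smul_comm]
        exact Submodule.smul_mem_smul hr Submodule.mem_top
      · intro x y hx hy
        rw [mul_add]
        exact Submodule.add_mem _ hx hy
    have hk : (B k : S) ∈ J • (⊤ : Submodule R S) := by
      have := hmul (B k) 1 h1
      rwa [mul_one] at this
    have h1J : (1 : R) ∈ J := by
      have := repr_mem_of_mem_smul B hk k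
      rwa [Module.Basis.repr_self, Finsupp.single_eq_same] at this
    exact (Ideal.eq_top_iff_one _).mpr h1J
  -- find a unit coordinate of 1
  have hex : ∃ i₀, IsUnit (B.repr 1 i₀) := by
    by_contra hno
    push_neg at hno
    have hsub : Ideal.span (Set.range (B.repr 1)) ≤ IsLocalRing.maximalIdeal R := by
      rw [Ideal.span_le]
      rintro _ ⟨i, rfl⟩
      exact (IsLocalRing.mem_maximalIdeal _).mpr (hno i)
    rw [honetop] at hsub
    exact (IsLocalRing.maximalIdeal.isMaximal R).ne_top (top_le_iff.mp hsub)
  obtain ⟨i₀, hu⟩ := hex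
  have hexj : ∃ j, j ≠ i₀ := by
    by_contra hno
    push_neg at hno
    have : Subsingleton (Module.Free.ChooseBasisIndex R S) :=
      ⟨fun x y => by rw [hno x, hno y]⟩
    have := Cardinal.le_one_iff_subsingleton.mpr this
    exact absurd (lt_of_lt_of_le hcard this) (lt_irrefl _)
  obtain ⟨j, hj⟩ := hexj
  set w : S := B j with hw
  -- dual functionals
  set φ : S →ₗ[R] R := (↑hu.unit⁻¹ : R) • B.coord i₀ with hφ
  set ψ : S →ₗ[R] R := B.coord j - (B.repr 1 j) • φ with hψ
  have hφ1 : φ (1 : S) = 1 := by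
    rw [hφ]
    simp only [LinearMap.smul_apply, Module.Basis.coord_apply, smul_eq_mul]
    exact hu.val_inv_mul
  have hφw : φ w = 0 := by
    rw [hφ, hw]
    simp only [LinearMap.smul_apply, Module.Basis.coord_apply, smul_eq_mul, Module.Basis.repr_self]
    rw [Finsupp.single_eq_of_ne' hj, mul_zero]
  have hψ1 : ψ (1 : S) = 0 := by
    rw [hψ]
    simp only [LinearMap.sub_apply, LinearMap.smul_apply, smul_eq_mul, hφ1, mul_one,
      Module.Basis.coord_apply, sub_self]
  have hψw : ψ w = 1 := by
    rw [hψ]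
    simp only [LinearMap.sub_apply, LinearMap.smul_apply, Module.Basis.coord_apply, smul_eq_mul, hw,
      Module.Basis.repr_self, Finsupp.single_eq_same]
    rw [hφw]
    ring
  -- content of x•1 + y•w
  have hpair : ∀ x y : R, ohmRushContent R (x • (1 : S) + y • w) = Ideal.span {x, y} := by
    intro x y
    refine le_antisymm ?_ ?_
    · refine ohmRushContent_le ?_
      refine Submodule.add_mem _ ?_ ?_
      · exact Submodule.smul_mem_smul (Ideal.subset_span (by simp)) Submodule.mem_top
      · exact Submodule.smul_mem_smul (Ideal.subset_span (by simp)) Submodule.mem_top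
    · rw [Ideal.span_le]
      rintro z hz
      rcases hz with hz | hz
      · have : φ (x • (1 : S) + y • w) = x := by
          rw [map_add, map_smul, map_smul, hφ1, hφw, smul_eq_mul, smul_eq_mul,
            mul_one, mul_zero, add_zero]
        have hmem := apply_mem_content B φ (x • (1 : S) + y • w)
        rw [this] at hmem
        rwa [hz]
      · have hz' : z = y := hz
        have : ψ (x • (1 : S) + y • w) = y := by
          rw [map_add, map_smul, map_smul, hψ1, hψw, smul_eq_mul, smul_eq_mul,
            mul_zero, mul_one, zero_add]
        have hmem := apply_mem_content B ψ (x • (1 : S) + y • w)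
        rw [this] at hmem
        rwa [hz']
  -- product expansion
  have hexpand : ∀ x y u v : R,
      (x • (1 : S) + y • w) * (u • (1 : S) + v • w) =
        (x * u) • (1 : S) + (x * v + y * u) • w + (y * v) • (w * w) := by
    intro x y u v
    simp only [mul_add, add_mul, smul_mul_assoc, mul_smul_comm, smul_smul, one_mul, mul_one]
    module
  -- the candidate element
  refine ⟨a • (1 : S) + b • w, by rw [hpair, hIab], ?_⟩
  intro hG
  set f : S := a • (1 : S) + b • w with hf
  have hcf : ohmRushContent R f = Ideal.span {a, b} := hpair a b
  -- membership helper
  have hmem3 : ∀ (J : Ideal R) (x y z : R), x ∈ J → y ∈ J → z ∈ J →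
      x • (1 : S) + y • w + z • (w * w) ∈ J • (⊤ : Submodule R S) := by
    intro J x y z hx hy hz
    refine Submodule.add_mem _ (Submodule.add_mem _ ?_ ?_) ?_
    · exact Submodule.smul_mem_smul hx Submodule.mem_top
    · exact Submodule.smul_mem_smul hy Submodule.mem_top
    · exact Submodule.smul_mem_smul hz Submodule.mem_top
  -- step 1 : b*b ∈ (a*b, a*a + b*b)
  have hstep1 : b * b ∈ Ideal.span {a * b, a * a + b * b} := by
    have hcg : ohmRushContent R (b • (1 : S) + a • w) = Ideal.span {a, b} := by
      rw [hpair]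
      congr 1
      exact Set.pair_comm b a
    have hle : ohmRushContent R (f * (b • (1 : S) + a • w)) ≤
        Ideal.span {a * b, a * a + b * b} := by
      refine ohmRushContent_le ?_
      rw [hf, hexpand]
      refine hmem3 _ _ _ _ ?_ ?_ ?_
      · exact Ideal.mem_span_pair.mpr ⟨1, 0, by ring⟩
      · exact Ideal.mem_span_pair.mpr ⟨0, 1, by ring⟩
      · exact Ideal.mem_span_pair.mpr ⟨1, 0, by ring⟩
    have heq := hG (b • (1 : S) + a • w)
    rw [hcf, hcg] at heq
    have hbb : b * b ∈ Ideal.span {a, b} * Ideal.span {a, b} :=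
      Ideal.mul_mem_mul (Ideal.subset_span (by simp)) (Ideal.subset_span (by simp))
    rw [← heq] at hbb
    exact hle hbb
  obtain ⟨x, y, hxy⟩ := Ideal.mem_span_pair.mp hstep1
  have hdichot : IsUnit y ∨ IsUnit (1 - y) :=
    IsLocalRing.isUnit_or_isUnit_of_add_one (by ring)
  -- In either case we find p q with a quadratic relation leading to I*I principal
  have hprincipal : I.IsPrincipal := by
    rcases hdichot with hy | h1y
    · -- y unit : a*a = p*(a*b) + q*(b*b)
      set p : R := -(↑hy.unit⁻¹ : R) * x with hp
      set q : R := (↑hy.unit⁻¹ : R) * (1 - y) with hq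
      have hrel : a * a = p * (a * b) + q * (b * b) := by
        have h1 : (↑hy.unit⁻¹ : R) * y = 1 := hy.val_inv_mul
        rw [hp, hq]
        linear_combination (↑hy.unit⁻¹ : R) * hxy - (a*a) * h1
      -- g := (p*b - a) • 1 + b • w
      set g : S := (p * b - a) • (1 : S) + b • w with hg
      have hcg : ohmRushContent R g = Ideal.span {a, b} := by
        rw [hg, hpair]
        refine le_antisymm ?_ ?_
        · rw [Ideal.span_le]
          rintro z hz
          rcases hz with hz | hz
          · rw [hz]
            exact Ideal.mem_span_pair.mpr ⟨-1, p, by ring⟩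
          · rw [hz]
            exact Ideal.subset_span (by simp)
        · rw [Ideal.span_le]
          rintro z hz
          rcases hz with hz | hz
          · rw [hz]
            exact Ideal.mem_span_pair.mpr ⟨-1, p, by ring⟩
          · rw [hz]
            exact Ideal.subset_span (by simp)
      have hfg : f * g ∈ Ideal.span {b * b} • (⊤ : Submodule R S) := by
        rw [hf, hg, hexpand]
        have e1 : a * (p * b - a) = -q * (b*b) := by linear_combination -hrel
        have e2 : a * b + b * (p * b - a) = p * (b*b) := by ring
        rw [e1, e2]
        refine hmem3 _ _ _ _ ?_ ?_ ?_
        · exact Ideal.mem_span_singleton'.mpr ⟨-q, rfl⟩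
        · exact Ideal.mem_span_singleton'.mpr ⟨p, rfl⟩
        · exact Ideal.mem_span_singleton'.mpr ⟨1, by ring⟩
      have heq := hG g
      rw [hcf, hcg] at heq
      have hsq : Ideal.span {a, b} * Ideal.span {a, b} = Ideal.span {b * b} := by
        refine le_antisymm ?_ ?_
        · rw [← heq]
          exact ohmRushContent_le hfg
        · rw [Ideal.span_le, Set.singleton_subset_iff]
          exact Ideal.mul_mem_mul (Ideal.subset_span (by simp)) (Ideal.subset_span (by simp))
      rw [hIab]
      exact principal_of_sq_eq_principal _ (mul_ne_zero hb hb) hsq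
    · -- 1-y unit : b*b = p*(a*b) + q*(a*a)
      set p : R := (↑h1y.unit⁻¹ : R) * x with hp
      set q : R := (↑h1y.unit⁻¹ : R) * y with hq
      have hrel : b * b = p * (a * b) + q * (a * a) := by
        have h1 : (↑h1y.unit⁻¹ : R) * (1 - y) = 1 := h1y.val_inv_mul
        rw [hp, hq]
        linear_combination (-(↑h1y.unit⁻¹ : R)) * hxy - (b*b) * h1
      set g : S := a • (1 : S) + (p * a - b) • w with hg
      have hcg : ohmRushContent R g = Ideal.span {a, b} := by
        rw [hg, hpair]
        refine le_antisymm ?_ ?_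
        · rw [Ideal.span_le]
          rintro z hz
          rcases hz with hz | hz
          · rw [hz]
            exact Ideal.subset_span (by simp)
          · rw [hz]
            exact Ideal.mem_span_pair.mpr ⟨p, -1, by ring⟩
        · rw [Ideal.span_le]
          rintro z hz
          rcases hz with hz | hz
          · rw [hz]
            exact Ideal.subset_span (by simp)
          · rw [hz]
            exact Ideal.mem_span_pair.mpr ⟨p, -1, by ring⟩
      have hfg : f * g ∈ Ideal.span {a * a} • (⊤ : Submodule R S) := by
        rw [hf, hg, hexpand]
        have e1 : a * (p * a - b) + b * a = p * (a*a) := by ring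
        have e2 : b * (p * a - b) = -q * (a*a) := by linear_combination -hrel
        rw [e1, e2]
        refine hmem3 _ _ _ _ ?_ ?_ ?_
        · exact Ideal.mem_span_singleton'.mpr ⟨1, by ring⟩
        · exact Ideal.mem_span_singleton'.mpr ⟨p, rfl⟩
        · exact Ideal.mem_span_singleton'.mpr ⟨-q, rfl⟩
      have heq := hG g
      rw [hcf, hcg] at heq
      have hsq : Ideal.span {a, b} * Ideal.span {a, b} = Ideal.span {a * a} := by
        refine le_antisymm ?_ ?_
        · rw [← heq]
          exact ohmRushContent_le hfg
        · rw [Ideal.span_le, Set.singleton_subset_iff]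
          exact Ideal.mul_mem_mul (Ideal.subset_span (by simp)) (Ideal.subset_span (by simp))
      rw [hIab]
      exact principal_of_sq_eq_principal _ (mul_ne_zero ha ha) hsq
  exact hInp hprincipal
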